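/- Let p_t(x | x₀, x₁) = (1 − κ_t) δ_{x₀}(x) + κ_t δ_{x₁}(x) with κ differentiable, κ_t ∈ [0,1), and x₀ ≠ x₁. Then the velocity u_t(x' | x) := (κ̇_t/(1 − κ_t))(δ_{x₁}(x') − δ_x(x')) satisfies the Kolmogorov forward equation d/dt p_t(x') = ∑_x u_t(x' | x) p_t(x) for all x' in the state space, where the sum is over the two-point support {x₀, x₁}. -/

import Mathlib

/-- The DFM conditional velocity satisfies the Kolmogorov forward equation for the
convex interpolant path conditioned on a fixed pair `(x₀, x₁)` with `x₀ ≠ x₁`. -/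
theorem stmt_19 {V : Type*} [DecidableEq V]
    (x₀ x₁ : V) (hne : x₀ ≠ x₁)
    (κ : ℝ → ℝ) (κdot : ℝ → ℝ) (t : ℝ) (hderiv : HasDerivAt κ (κdot t) t)
    (hκt : κ t ∈ Set.Ico (0:ℝ) 1)
    (p : ℝ → V → ℝ)
    (hp : ∀ s x, p s x =
      (1 - κ s) * (if x = x₀ then 1 else 0) + κ s * (if x = x₁ then 1 else 0))
    (u : V → V → ℝ)
    (hu : ∀ x' x, u x' x =
      (κdot t / (1 - κ t)) * ((if x' = x₁ then 1 else 0) - (if x' = x then 1 else 0))) :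
    ∀ x', HasDerivAt (fun s => p s x') (∑ x ∈ ({x₀, x₁} : Finset V), u x' x * p t x) t := by
  intro x'
  have h1 : (1 : ℝ) - κ t ≠ 0 := by
    have := hκt.2; linarith
  have hsum : (∑ x ∈ ({x₀, x₁} : Finset V), u x' x * p t x) =
      κdot t * ((if x' = x₁ then 1 else 0) - (if x' = x₀ then 1 else 0)) := by
    rw [Finset.sum_pair hne, hu, hu, hp, hp]
    simp only [if_neg hne.symm, if_neg hne, mul_zero, mul_one, zero_add, add_zero, sub_self]
    field_simp
    simp
  rw [hsum]
  have : HasDerivAt (fun s => (1 - κ s) * (if x' = x₀ then 1 else 0)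
      + κ s * (if x' = x₁ then 1 else 0))
      (κdot t * ((if x' = x₁ then 1 else 0) - (if x' = x₀ then 1 else 0))) t := by
    have h2 := ((hderiv.const_sub 1).mul_const (if x' = x₀ then (1:ℝ) else 0)).add
      (hderiv.mul_const (if x' = x₁ then (1:ℝ) else 0))
    refine h2.congr_deriv ?_
    ring
  exact this.congr_of_eventuallyEq (Filter.Eventually.of_forall fun s => (hp s x'))
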